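/- Let Q be a Markov generator on a finite set Ω reversible with respect to π, with partition {Ω_i}, projection chain (Q̄, π̄), restriction chains (Q_i, π_i), couplings κ_{ij} of π_i and π_j for pairs with Q̄(i,j) > 0, and χ := min π(x)Q(x,y)/(π̄(i)Q̄(i,j)κ_{ij}(x,y)) over all quadruples with positive denominator. Then the modified log-Sobolev constant satisfies α(Q) ≥ min{ χ·α(Q̄), min_i α(Q_i) }. -/

import Mathlib

open Finset

/-- Expectation of `f` under `π`. -/
def expec {Ω : Type*} [Fintype Ω] (π f : Ω → ℝ) : ℝ := ∑ x, π x * f x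

/-- Entropy of a positive `f` under `π`. -/
noncomputable def entOf {Ω : Type*} [Fintype Ω] (π f : Ω → ℝ) : ℝ :=
  expec π (fun x => f x * Real.log (f x)) - expec π f * Real.log (expec π f)

lemma mul_log_ge (A B : ℝ) (hA : 0 < A) (hB : 0 < B) :
    A - B ≤ A * (Real.log A - Real.log B) := by
  have h := Real.log_le_sub_one_of_pos (x := B / A) (by positivity)
  rw [Real.log_div hB.ne' hA.ne'] at h
  have := mul_le_mul_of_nonneg_left h hA.le
  rw [mul_sub] at this
  field_simp at this ⊢
  nlinarith

lemma mul_log_le (A B : ℝ) (hA : 0 < A) (hB : 0 < B) :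
    B * (Real.log A - Real.log B) ≤ A - B := by
  have h := Real.log_le_sub_one_of_pos (x := A / B) (by positivity)
  rw [Real.log_div hA.ne' hB.ne'] at h
  have := mul_le_mul_of_nonneg_left h hB.le
  rw [mul_sub] at this
  have hB' : B * (A / B - 1) = A - B := by field_simp
  nlinarith [this]

lemma phi_nonneg (a b : ℝ) (ha : 0 < a) (hb : 0 < b) :
    0 ≤ (a - b) * (Real.log a - Real.log b) := by
  rcases le_total a b with h | h
  · have := Real.log_le_log ha h
    have h2 : (a - b) * (Real.log a - Real.log b)
        = (-(a-b)) * (-(Real.log a - Real.log b)) := by ring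
    rw [h2]
    exact mul_nonneg (by linarith) (by linarith)
  · have := Real.log_le_log hb h
    exact mul_nonneg (by linarith) (by linarith)

lemma tangent (a b c d : ℝ) (ha : 0 < a) (hb : 0 < b) (hc : 0 < c) (hd : 0 < d) :
    (c - d) * (Real.log c - Real.log d)
      + (Real.log c - Real.log d + 1 - d / c) * (a - c)
      + (Real.log d - Real.log c + 1 - c / d) * (b - d)
      ≤ (a - b) * (Real.log a - Real.log b) := by
  have hX : Real.log (a * d) - Real.log (b * c)
      = (Real.log a - Real.log b) - (Real.log c - Real.log d) := by
    rw [Real.log_mul ha.ne' hd.ne', Real.log_mul hb.ne' hc.ne']; ring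
  have H1 := mul_log_ge (a * d) (b * c) (by positivity) (by positivity)
  have H2 := mul_log_le (a * d) (b * c) (by positivity) (by positivity)
  rw [hX] at H1 H2
  rw [← sub_nonneg]
  have key : 0 ≤ c * (a * d * ((Real.log a - Real.log b) - (Real.log c - Real.log d)) - (a*d - b*c))
      + d * ((a*d - b*c) - b * c * ((Real.log a - Real.log b) - (Real.log c - Real.log d))) := by
    nlinarith [mul_nonneg hc.le (sub_nonneg.mpr H1), mul_nonneg hd.le (sub_nonneg.mpr H2)]
  have heq : (a - b) * (Real.log a - Real.log b)
      - ((c - d) * (Real.log c - Real.log d)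
      + (Real.log c - Real.log d + 1 - d / c) * (a - c)
      + (Real.log d - Real.log c + 1 - c / d) * (b - d))
      = (c * (a * d * ((Real.log a - Real.log b) - (Real.log c - Real.log d)) - (a*d - b*c))
      + d * ((a*d - b*c) - b * c * ((Real.log a - Real.log b) - (Real.log c - Real.log d)))) / (c * d) := by
    field_simp
    ring
  rw [heq]
  positivity

/-- symmetrization over a swap-invariant pair set, using reversibility -/
lemma sym_pairs {n : Type*} [Fintype n] [DecidableEq n]
    (μ : n → ℝ) (K : n → n → ℝ) (u v : n → ℝ)
    (hrev : ∀ x y, μ x * K x y = μ y * K y x)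
    (S : Finset (n × n)) (hS : ∀ q ∈ S, q.swap ∈ S) :
    ∑ q ∈ S, μ q.1 * K q.1 q.2 * (u q.1 * (v q.1 - v q.2)) =
      (1/2) * ∑ q ∈ S, μ q.1 * K q.1 q.2 * ((u q.1 - u q.2) * (v q.1 - v q.2)) := by
  have hswap : ∑ q ∈ S, μ q.1 * K q.1 q.2 * (u q.2 * (v q.2 - v q.1)) =
      ∑ q ∈ S, μ q.1 * K q.1 q.2 * (u q.1 * (v q.1 - v q.2)) := by
    refine Finset.sum_nbij' (fun q : n × n => q.swap) (fun q : n × n => q.swap)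
      (fun q hq => hS q hq) (fun q hq => hS q hq)
      (fun q _ => Prod.swap_swap q) (fun q _ => Prod.swap_swap q) (fun q _ => ?_)
    simp only [Prod.fst_swap, Prod.snd_swap]
    rw [hrev q.2 q.1]
  have e : ∑ q ∈ S, μ q.1 * K q.1 q.2 * ((u q.1 - u q.2) * (v q.1 - v q.2)) =
      ∑ q ∈ S, (μ q.1 * K q.1 q.2 * (u q.1 * (v q.1 - v q.2))
        + μ q.1 * K q.1 q.2 * (u q.2 * (v q.2 - v q.1))) := by
    refine Finset.sum_congr rfl fun q _ => by ring
  rw [e, Finset.sum_add_distrib, hswap]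
  ring

lemma ent_nonneg' {Ω : Type*} [Fintype Ω] (μ f : Ω → ℝ)
    (hμ : ∀ x, 0 ≤ μ x) (h1 : ∑ x, μ x = 1) (hf : ∀ x, 0 < f x)
    (hm : 0 < ∑ x, μ x * f x) :
    0 ≤ (∑ x, μ x * (f x * Real.log (f x))) - (∑ x, μ x * f x) * Real.log (∑ x, μ x * f x) := by
  set m := ∑ x, μ x * f x with hmdef
  have key : ∀ x, μ x * (f x * Real.log m + f x - m) ≤ μ x * (f x * Real.log (f x)) := by
    intro x
    refine mul_le_mul_of_nonneg_left ?_ (hμ x)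
    have := mul_log_ge (f x) m (hf x) hm
    nlinarith [this]
  have hsum := Finset.sum_le_sum (s := Finset.univ) (fun x _ => key x)
  have hlhs : ∑ x, μ x * (f x * Real.log m + f x - m) = m * Real.log m := by
    have e1 : ∀ x, μ x * (f x * Real.log m + f x - m)
        = (μ x * f x) * Real.log m + μ x * f x - μ x * m := by intro x; ring
    simp only [e1, Finset.sum_sub_distrib, Finset.sum_add_distrib, ← Finset.sum_mul, ← hmdef, h1]
    ring
  rw [hlhs] at hsum
  linarith

lemma ent_nonneg {Ω : Type*} [Fintype Ω] (μ f : Ω → ℝ)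
    (hμ : ∀ x, 0 ≤ μ x) (h1 : ∑ x, μ x = 1) (hf : ∀ x, 0 < f x)
    (hm : 0 < ∑ x, μ x * f x) : 0 ≤ entOf μ f :=
  ent_nonneg' μ f hμ h1 hf hm

lemma sum_product_filter {α β : Type*} [Fintype α] [Fintype β]
    (φ : α → β → Prop) [∀ x y, Decidable (φ x y)] (F : α → β → ℝ) :
    ∑ q ∈ (univ ×ˢ univ : Finset (α × β)).filter (fun q => φ q.1 q.2), F q.1 q.2
      = ∑ x, ∑ y ∈ univ.filter (fun y => φ x y), F x y := by
  rw [Finset.sum_filter, Finset.sum_product]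
  simp [Finset.sum_filter]

lemma generator_form {n : Type*} [Fintype n] (μ : n → ℝ) (K : n → n → ℝ) (u v : n → ℝ)
    (hrow : ∀ x, ∑ y, K x y = 0) :
    -(∑ x, μ x * u x * ∑ y, K x y * v y)
      = ∑ q ∈ (univ ×ˢ univ : Finset (n × n)), μ q.1 * K q.1 q.2 * (u q.1 * (v q.1 - v q.2)) := by
  rw [Finset.sum_product, ← Finset.sum_neg_distrib]
  refine Finset.sum_congr rfl fun x _ => ?_
  have h1 : ∑ y, μ x * K x y * (u x * (v x - v y))
      = (μ x * u x * v x) * (∑ y, K x y) - μ x * u x * ∑ y, K x y * v y := by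
    rw [Finset.mul_sum, Finset.mul_sum, ← Finset.sum_sub_distrib]
    exact Finset.sum_congr rfl fun y _ => by ring
  rw [h1, hrow, mul_zero, zero_sub]

lemma group_cross {Ω I : Type*} [Fintype Ω] [Fintype I] [DecidableEq I]
    (p : Ω → I) (V : Ω → Ω → ℝ) :
    ∑ x, ∑ y ∈ univ.filter (fun y => ¬ p x = p y), V x y
      = ∑ i, ∑ j ∈ univ.filter (fun j => ¬ i = j),
          ∑ x ∈ univ.filter (fun x => p x = i), ∑ y ∈ univ.filter (fun y => p y = j), V x y := by
  rw [← Finset.sum_fiberwise (univ : Finset Ω) p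
    (fun x => ∑ y ∈ univ.filter (fun y => ¬ p x = p y), V x y)]
  refine Finset.sum_congr rfl fun i _ => ?_
  conv_rhs => rw [Finset.sum_comm]
  refine Finset.sum_congr rfl fun x hx => ?_
  have hpx : p x = i := (mem_filter.mp hx).2
  have e0 : univ.filter (fun y => ¬ p x = p y) = univ.filter (fun y => ¬ i = p y) := by
    rw [hpx]
  rw [e0, ← Finset.sum_fiberwise (univ.filter (fun y => ¬ i = p y)) p (fun y => V x y),
    Finset.sum_filter]
  refine Finset.sum_congr rfl fun j _ => ?_
  by_cases hij : ¬ i = j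
  · rw [if_pos hij]
    refine Finset.sum_congr ?_ fun _ _ => rfl
    ext y
    simp only [Finset.mem_filter, Finset.mem_univ, true_and]
    constructor
    · rintro ⟨-, h2⟩; exact h2
    · intro h2; exact ⟨by rw [h2]; exact hij, h2⟩
  · rw [if_neg hij]
    push_neg at hij
    refine Finset.sum_eq_zero fun y hy => ?_
    exfalso
    simp only [Finset.mem_filter, Finset.mem_univ, true_and] at hy
    exact hy.1 (by rw [hij, hy.2])

theorem decomposition_mlsi {Ω I : Type*} [Fintype Ω] [Fintype I] [Nonempty I]
    [DecidableEq Ω] [DecidableEq I]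
    (π : Ω → ℝ) (Q : Ω → Ω → ℝ) (p : Ω → I)
    (hπ : ∀ x, 0 < π x) (hπ1 : ∑ x, π x = 1)
    (hQoff : ∀ x y, x ≠ y → 0 ≤ Q x y)
    (hQrow : ∀ x, ∑ y, Q x y = 0)
    (hrev : ∀ x y, π x * Q x y = π y * Q y x)
    (hsurj : Function.Surjective p)
    -- projection chain
    (pbar : I → ℝ) (hpbar : ∀ i, pbar i = ∑ x ∈ univ.filter (fun x => p x = i), π x)
    (Qbar : I → I → ℝ)
    (hQbaroff : ∀ i j, i ≠ j → Qbar i j =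
      (1 / pbar i) * ∑ x ∈ univ.filter (fun x => p x = i),
        ∑ y ∈ univ.filter (fun y => p y = j), π x * Q x y)
    (hQbarrow : ∀ i, ∑ j, Qbar i j = 0)
    -- conditional measures
    (cond : I → Ω → ℝ)
    (hcond : ∀ i x, cond i x = if p x = i then π x / pbar i else 0)
    -- couplings and their quality χ
    (κ : I → I → Ω → Ω → ℝ) (hκ : ∀ i j x y, 0 ≤ κ i j x y)
    (hmarg1 : ∀ i j, i ≠ j → 0 < Qbar i j → ∀ x, p x = i →
      ∑ y ∈ univ.filter (fun y => p y = j), κ i j x y = cond i x)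
    (hmarg2 : ∀ i j, i ≠ j → 0 < Qbar i j → ∀ y, p y = j →
      ∑ x ∈ univ.filter (fun x => p x = i), κ i j x y = cond j y)
    (χ : ℝ) (hχ : 0 ≤ χ)
    (hχle : ∀ i j x y, i ≠ j → p x = i → p y = j → 0 < Qbar i j →
      χ * (pbar i * Qbar i j * κ i j x y) ≤ π x * Q x y)
    -- modified log-Sobolev inequalities for the projection and restriction chains
    (abar : ℝ)
    (hproj : ∀ g : I → ℝ, (∀ i, 0 < g i) →
      -(∑ i, pbar i * g i * ∑ j, Qbar i j * Real.log (g j)) ≥ abar * entOf pbar g)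
    (alo : I → ℝ)
    (hres : ∀ i, ∀ f : Ω → ℝ, (∀ x, 0 < f x) →
      -(∑ x, cond i x * f x *
          ∑ y ∈ univ.filter (fun y => p y = i ∧ y ≠ x),
            Q x y * (Real.log (f y) - Real.log (f x))) ≥
        alo i * entOf (cond i) f) :
    ∀ f : Ω → ℝ, (∀ x, 0 < f x) →
      -(∑ x, π x * f x * ∑ y, Q x y * Real.log (f y)) ≥
        min (χ * abar) (Finset.univ.inf' Finset.univ_nonempty alo) * entOf π f := by
  intro f hf
  have hΩne : Nonempty Ω := ⟨(hsurj (Classical.arbitrary I)).choose⟩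
  set Ωf : I → Finset Ω := fun i => univ.filter (fun x => p x = i) with hΩf
  have hblock : ∀ i, (Ωf i).Nonempty := by
    intro i; obtain ⟨x, hx⟩ := hsurj i
    exact ⟨x, by simp [hΩf, hx]⟩
  have hpbarpos : ∀ i, 0 < pbar i := by
    intro i; rw [hpbar i]; exact Finset.sum_pos (fun x _ => hπ x) (hblock i)
  have hcondnn : ∀ i x, 0 ≤ cond i x := by
    intro i x; rw [hcond]
    split
    · exact div_nonneg (hπ x).le (hpbarpos i).le
    · exact le_refl 0
  have hpc : ∀ i x, p x = i → pbar i * cond i x = π x := by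
    intro i x hx; rw [hcond, if_pos hx]
    field_simp [(hpbarpos i).ne']
  have hcz : ∀ i x, ¬ p x = i → cond i x = 0 := by
    intro i x h; rw [hcond, if_neg h]
  have hcondpos : ∀ i x, p x = i → 0 < cond i x := by
    intro i x hx; rw [hcond, if_pos hx]
    exact div_pos (hπ x) (hpbarpos i)
  have hcondsum : ∀ i, ∑ x, cond i x = 1 := by
    intro i
    have e1 : ∑ x, cond i x = ∑ x ∈ Ωf i, π x / pbar i := by
      rw [hΩf, Finset.sum_filter]
      exact Finset.sum_congr rfl fun x _ => hcond i x
    rw [e1, ← Finset.sum_div, ← hpbar i, div_self (hpbarpos i).ne']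
  obtain ⟨g, hgdef⟩ : ∃ g : I → ℝ, g = fun i => ∑ x, cond i x * f x := ⟨_, rfl⟩
  have hgi : ∀ i, g i = ∑ x, cond i x * f x := fun i => by rw [hgdef]
  have hgpos : ∀ i, 0 < g i := by
    intro i
    obtain ⟨x0, hx0⟩ := hblock i
    have hx0' : p x0 = i := by simpa [hΩf] using hx0
    rw [hgi]
    exact Finset.sum_pos' (fun x _ => mul_nonneg (hcondnn i x) (hf x).le)
      ⟨x0, Finset.mem_univ _, mul_pos (hcondpos i x0 hx0') (hf x0)⟩
  -- fiber decomposition of expectations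
  have hfiber : ∀ h : Ω → ℝ, ∑ x, π x * h x = ∑ i, pbar i * ∑ x, cond i x * h x := by
    intro h
    have e : ∀ i, pbar i * ∑ x, cond i x * h x = ∑ x, (if p x = i then π x * h x else 0) := by
      intro i
      rw [Finset.mul_sum]
      refine Finset.sum_congr rfl fun x _ => ?_
      by_cases hx : p x = i
      · rw [if_pos hx, ← hpc i x hx]; ring
      · rw [if_neg hx, hcz i x hx]; ring
    simp only [e]
    rw [Finset.sum_comm]
    refine Finset.sum_congr rfl fun x _ => ?_
    simp
  have hpbarsum : ∑ i, pbar i = 1 := by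
    have h := hfiber (fun _ => 1)
    simp only [mul_one] at h
    rw [hπ1] at h
    calc ∑ i, pbar i = ∑ i, pbar i * ∑ x, cond i x := by
          refine Finset.sum_congr rfl fun i _ => by rw [hcondsum i, mul_one]
      _ = 1 := h.symm
  have hmpos : 0 < ∑ x, π x * f x :=
    Finset.sum_pos (fun x _ => mul_pos (hπ x) (hf x)) Finset.univ_nonempty
  -- entropy decomposition
  have hentdec : entOf π f = (∑ i, pbar i * entOf (cond i) f) + entOf pbar g := by
    have h1 := hfiber (fun x => f x * Real.log (f x))
    have h2 := hfiber f
    have hA : ∀ i, pbar i * entOf (cond i) f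
        = pbar i * (∑ x, cond i x * (f x * Real.log (f x))) - pbar i * (g i * Real.log (g i)) := by
      intro i
      unfold entOf expec
      rw [← hgi i]
      ring
    calc entOf π f
        = (∑ x, π x * (f x * Real.log (f x)))
            - (∑ x, π x * f x) * Real.log (∑ x, π x * f x) := rfl
      _ = (∑ i, pbar i * ∑ x, cond i x * (f x * Real.log (f x)))
            - (∑ i, pbar i * g i) * Real.log (∑ i, pbar i * g i) := by
          rw [h1, h2]
          simp only [← hgi]
      _ = (∑ i, (pbar i * (∑ x, cond i x * (f x * Real.log (f x)))
              - pbar i * (g i * Real.log (g i))))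
            + ((∑ i, pbar i * (g i * Real.log (g i)))
              - (∑ i, pbar i * g i) * Real.log (∑ i, pbar i * g i)) := by
          rw [Finset.sum_sub_distrib]
          ring
      _ = (∑ i, pbar i * entOf (cond i) f) + entOf pbar g := by
          simp only [hA]
          rfl
  -- entropy nonnegativity
  have hEntinn : ∀ i, 0 ≤ entOf (cond i) f := by
    intro i
    refine ent_nonneg (cond i) f (hcondnn i) (hcondsum i) hf ?_
    rw [← hgi]; exact hgpos i
  have hEntbarnn : 0 ≤ entOf pbar g := by
    refine ent_nonneg pbar g (fun i => (hpbarpos i).le) hpbarsum hgpos ?_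
    refine Finset.sum_pos (fun i _ => mul_pos (hpbarpos i) (hgpos i)) Finset.univ_nonempty
  -- the Dirichlet form as a sum over pairs
  have hD : -(∑ x, π x * f x * ∑ y, Q x y * Real.log (f y))
      = ∑ q ∈ (univ ×ˢ univ : Finset (Ω × Ω)),
          π q.1 * Q q.1 q.2 * (f q.1 * (Real.log (f q.1) - Real.log (f q.2))) :=
    generator_form π Q f (fun x => Real.log (f x)) hQrow
  have hsplit : ∑ q ∈ (univ ×ˢ univ : Finset (Ω × Ω)),
          π q.1 * Q q.1 q.2 * (f q.1 * (Real.log (f q.1) - Real.log (f q.2)))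
      = ∑ q ∈ (univ ×ˢ univ : Finset (Ω × Ω)).filter (fun q => p q.1 = p q.2),
          π q.1 * Q q.1 q.2 * (f q.1 * (Real.log (f q.1) - Real.log (f q.2)))
        + ∑ q ∈ (univ ×ˢ univ : Finset (Ω × Ω)).filter (fun q => ¬ p q.1 = p q.2),
          π q.1 * Q q.1 q.2 * (f q.1 * (Real.log (f q.1) - Real.log (f q.2))) :=
    (Finset.sum_filter_add_sum_filter_not _ _ _).symm
  -- the same-block part equals the weighted restriction forms
  have hsame : ∑ q ∈ (univ ×ˢ univ : Finset (Ω × Ω)).filter (fun q => p q.1 = p q.2),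
          π q.1 * Q q.1 q.2 * (f q.1 * (Real.log (f q.1) - Real.log (f q.2)))
      = ∑ i, pbar i * (-(∑ x, cond i x * f x *
          ∑ y ∈ univ.filter (fun y => p y = i ∧ y ≠ x),
            Q x y * (Real.log (f y) - Real.log (f x)))) := by
    rw [sum_product_filter (fun x y => p x = p y)
      (fun x y => π x * Q x y * (f x * (Real.log (f x) - Real.log (f y))))]
    have key : ∀ i, pbar i * (-(∑ x, cond i x * f x *
          ∑ y ∈ univ.filter (fun y => p y = i ∧ y ≠ x),
            Q x y * (Real.log (f y) - Real.log (f x))))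
        = ∑ x, (if p x = i then
            ∑ y ∈ univ.filter (fun y => p y = i ∧ y ≠ x),
              π x * Q x y * (f x * (Real.log (f x) - Real.log (f y))) else 0) := by
      intro i
      rw [← Finset.sum_neg_distrib, Finset.mul_sum]
      refine Finset.sum_congr rfl fun x _ => ?_
      by_cases hx : p x = i
      · rw [if_pos hx]
        calc pbar i * -(cond i x * f x * ∑ y ∈ univ.filter (fun y => p y = i ∧ y ≠ x),
                Q x y * (Real.log (f y) - Real.log (f x)))
            = (pbar i * cond i x) * (f x * ∑ y ∈ univ.filter (fun y => p y = i ∧ y ≠ x),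
                -(Q x y * (Real.log (f y) - Real.log (f x)))) := by
              rw [Finset.sum_neg_distrib]; ring
          _ = π x * (f x * ∑ y ∈ univ.filter (fun y => p y = i ∧ y ≠ x),
                -(Q x y * (Real.log (f y) - Real.log (f x)))) := by rw [hpc i x hx]
          _ = ∑ y ∈ univ.filter (fun y => p y = i ∧ y ≠ x),
                π x * Q x y * (f x * (Real.log (f x) - Real.log (f y))) := by
              rw [Finset.mul_sum, Finset.mul_sum]
              exact Finset.sum_congr rfl fun y _ => by ring
      · rw [if_neg hx, hcz i x hx]
        ring
    rw [Finset.sum_congr rfl (fun i (_ : i ∈ (univ : Finset I)) => key i), Finset.sum_comm]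
    refine Finset.sum_congr rfl fun x _ => ?_
    rw [Finset.sum_ite_eq (univ : Finset I) (p x)
      (fun i => ∑ y ∈ univ.filter (fun y => p y = i ∧ y ≠ x),
        π x * Q x y * (f x * (Real.log (f x) - Real.log (f y)))), if_pos (Finset.mem_univ _)]
    have e1 : univ.filter (fun y => p y = p x ∧ y ≠ x)
        = (univ.filter (fun y => p x = p y)).erase x := by
      ext y
      simp only [Finset.mem_filter, Finset.mem_erase, Finset.mem_univ, true_and]
      constructor
      · rintro ⟨h1, h2⟩; exact ⟨h2, h1.symm⟩
      · rintro ⟨h2, h1⟩; exact ⟨h1.symm, h2⟩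
    rw [e1]
    exact (Finset.sum_erase _ (by simp)).symm
  -- lower bound for the same-block part
  have hsamelb : ∑ q ∈ (univ ×ˢ univ : Finset (Ω × Ω)).filter (fun q => p q.1 = p q.2),
          π q.1 * Q q.1 q.2 * (f q.1 * (Real.log (f q.1) - Real.log (f q.2)))
      ≥ (Finset.univ.inf' Finset.univ_nonempty alo) * ∑ i, pbar i * entOf (cond i) f := by
    rw [hsame, ge_iff_le, Finset.mul_sum]
    refine Finset.sum_le_sum fun i _ => ?_
    have h1 := hres i f hf
    have h2 : (Finset.univ.inf' Finset.univ_nonempty alo) * entOf (cond i) f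
        ≤ alo i * entOf (cond i) f :=
      mul_le_mul_of_nonneg_right (Finset.inf'_le _ (Finset.mem_univ i)) (hEntinn i)
    calc (Finset.univ.inf' Finset.univ_nonempty alo) * (pbar i * entOf (cond i) f)
        = pbar i * ((Finset.univ.inf' Finset.univ_nonempty alo) * entOf (cond i) f) := by ring
      _ ≤ pbar i * (-(∑ x, cond i x * f x *
            ∑ y ∈ univ.filter (fun y => p y = i ∧ y ≠ x),
              Q x y * (Real.log (f y) - Real.log (f x)))) :=
          mul_le_mul_of_nonneg_left (le_trans h2 h1) (hpbarpos i).le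
  -- symmetrized cross part
  have hPcswap : ∀ q ∈ (univ ×ˢ univ : Finset (Ω × Ω)).filter (fun q => ¬ p q.1 = p q.2),
      q.swap ∈ (univ ×ˢ univ : Finset (Ω × Ω)).filter (fun q => ¬ p q.1 = p q.2) := by
    intro q hq
    simp only [Finset.mem_filter, Finset.mem_product, Finset.mem_univ, true_and,
      Prod.fst_swap, Prod.snd_swap] at *
    exact fun h => hq h.symm
  have hcrossym : ∑ q ∈ (univ ×ˢ univ : Finset (Ω × Ω)).filter (fun q => ¬ p q.1 = p q.2),
          π q.1 * Q q.1 q.2 * (f q.1 * (Real.log (f q.1) - Real.log (f q.2)))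
      = (1/2) * ∑ q ∈ (univ ×ˢ univ : Finset (Ω × Ω)).filter (fun q => ¬ p q.1 = p q.2),
          π q.1 * Q q.1 q.2 * ((f q.1 - f q.2) * (Real.log (f q.1) - Real.log (f q.2))) :=
    sym_pairs π Q f (fun x => Real.log (f x)) hrev _ hPcswap
  -- grouping of the cross part by block pairs
  have hgroup : ∑ q ∈ (univ ×ˢ univ : Finset (Ω × Ω)).filter (fun q => ¬ p q.1 = p q.2),
          π q.1 * Q q.1 q.2 * ((f q.1 - f q.2) * (Real.log (f q.1) - Real.log (f q.2)))
      = ∑ i, ∑ j ∈ univ.filter (fun j => ¬ i = j), ∑ x ∈ Ωf i, ∑ y ∈ Ωf j,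
          π x * Q x y * ((f x - f y) * (Real.log (f x) - Real.log (f y))) := by
    rw [sum_product_filter (fun x y => ¬ p x = p y)
      (fun x y => π x * Q x y * ((f x - f y) * (Real.log (f x) - Real.log (f y))))]
    exact group_cross p _
  -- reversibility of the projection chain
  have hQbrev : ∀ i j, pbar i * Qbar i j = pbar j * Qbar j i := by
    have key : ∀ i j, i ≠ j → pbar i * Qbar i j = ∑ x ∈ Ωf i, ∑ y ∈ Ωf j, π x * Q x y := by
      intro i j hij
      rw [hQbaroff i j hij, one_div, ← mul_assoc, mul_inv_cancel₀ (hpbarpos i).ne', one_mul]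
    intro i j
    by_cases hij : i = j
    · rw [hij]
    · rw [key i j hij, key j i (Ne.symm hij), Finset.sum_comm]
      exact Finset.sum_congr rfl fun y _ => Finset.sum_congr rfl fun x _ => hrev x y
  have hQbnn : ∀ i j, ¬ i = j → 0 ≤ Qbar i j := by
    intro i j hij
    rw [hQbaroff i j hij]
    refine mul_nonneg (one_div_nonneg.mpr (hpbarpos i).le) ?_
    refine Finset.sum_nonneg fun x hx => Finset.sum_nonneg fun y hy => ?_
    have hxy : x ≠ y := by
      intro h
      exact hij (by rw [← (Finset.mem_filter.mp hx).2, h, (Finset.mem_filter.mp hy).2])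
    exact mul_nonneg (hπ x).le (hQoff x y hxy)
  -- per-block-pair coupling bound
  have hij : ∀ i j, ¬ i = j →
      χ * (pbar i * Qbar i j) * ((g i - g j) * (Real.log (g i) - Real.log (g j)))
        ≤ ∑ x ∈ Ωf i, ∑ y ∈ Ωf j,
            π x * Q x y * ((f x - f y) * (Real.log (f x) - Real.log (f y))) := by
    intro i j hij0
    have hij' : i ≠ j := hij0
    have hmemx : ∀ q : Ω × Ω, q ∈ Ωf i ×ˢ Ωf j → p q.1 = i ∧ p q.2 = j := by
      intro q hq
      rw [Finset.mem_product] at hq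
      exact ⟨(Finset.mem_filter.mp hq.1).2, (Finset.mem_filter.mp hq.2).2⟩
    by_cases hQb : 0 < Qbar i j
    · -- marginal identities
      have hext : ∀ (F : Ω → ℝ), (∀ x, ¬ p x = i → F x = 0) → ∑ x ∈ Ωf i, F x = ∑ x, F x := by
        intro F hF
        rw [hΩf, Finset.sum_filter]
        refine Finset.sum_congr rfl fun x _ => ?_
        by_cases hx : p x = i
        · rw [if_pos hx]
        · rw [if_neg hx, hF x hx]
      have hextj : ∀ (F : Ω → ℝ), (∀ y, ¬ p y = j → F y = 0) → ∑ y ∈ Ωf j, F y = ∑ y, F y := by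
        intro F hF
        rw [hΩf, Finset.sum_filter]
        refine Finset.sum_congr rfl fun y _ => ?_
        by_cases hy : p y = j
        · rw [if_pos hy]
        · rw [if_neg hy, hF y hy]
      have hSκ : ∑ q ∈ Ωf i ×ˢ Ωf j, κ i j q.1 q.2 = 1 := by
        rw [Finset.sum_product]
        have e1 : ∀ x ∈ Ωf i, ∑ y ∈ Ωf j, κ i j x y = cond i x := fun x hx =>
          hmarg1 i j hij' hQb x (Finset.mem_filter.mp hx).2
        rw [Finset.sum_congr rfl e1, hext (cond i) (fun x hx => hcz i x hx), hcondsum i]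
      have hSfx : ∑ q ∈ Ωf i ×ˢ Ωf j, κ i j q.1 q.2 * f q.1 = g i := by
        rw [Finset.sum_product]
        have e1 : ∀ x ∈ Ωf i, ∑ y ∈ Ωf j, κ i j x y * f x = cond i x * f x := by
          intro x hx
          rw [← Finset.sum_mul, hmarg1 i j hij' hQb x (Finset.mem_filter.mp hx).2]
        rw [Finset.sum_congr rfl e1,
          hext (fun x => cond i x * f x) (fun x hx => by simp only [hcz i x hx, zero_mul]), ← hgi i]
      have hSfy : ∑ q ∈ Ωf i ×ˢ Ωf j, κ i j q.1 q.2 * f q.2 = g j := by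
        rw [Finset.sum_product, Finset.sum_comm]
        have e1 : ∀ y ∈ Ωf j, ∑ x ∈ Ωf i, κ i j x y * f y = cond j y * f y := by
          intro y hy
          rw [← Finset.sum_mul, hmarg2 i j hij' hQb y (Finset.mem_filter.mp hy).2]
        rw [Finset.sum_congr rfl e1,
          hextj (fun y => cond j y * f y) (fun y hy => by simp only [hcz j y hy, zero_mul]), ← hgi j]
      -- Jensen via the tangent inequality
      have htan : ∀ q ∈ Ωf i ×ˢ Ωf j,
          κ i j q.1 q.2 * ((g i - g j) * (Real.log (g i) - Real.log (g j))
              + (Real.log (g i) - Real.log (g j) + 1 - g j / g i) * (f q.1 - g i)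
              + (Real.log (g j) - Real.log (g i) + 1 - g i / g j) * (f q.2 - g j))
            ≤ κ i j q.1 q.2 * ((f q.1 - f q.2) * (Real.log (f q.1) - Real.log (f q.2))) :=
        fun q _ => mul_le_mul_of_nonneg_left
          (tangent (f q.1) (f q.2) (g i) (g j) (hf _) (hf _) (hgpos i) (hgpos j))
          (hκ i j q.1 q.2)
      have hJ : (g i - g j) * (Real.log (g i) - Real.log (g j))
          ≤ ∑ q ∈ Ωf i ×ˢ Ωf j, κ i j q.1 q.2
              * ((f q.1 - f q.2) * (Real.log (f q.1) - Real.log (f q.2))) := by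
        have hsum := Finset.sum_le_sum htan
        have hL : ∑ q ∈ Ωf i ×ˢ Ωf j,
            κ i j q.1 q.2 * ((g i - g j) * (Real.log (g i) - Real.log (g j))
              + (Real.log (g i) - Real.log (g j) + 1 - g j / g i) * (f q.1 - g i)
              + (Real.log (g j) - Real.log (g i) + 1 - g i / g j) * (f q.2 - g j))
            = (g i - g j) * (Real.log (g i) - Real.log (g j)) := by
          have e2 : ∀ q ∈ Ωf i ×ˢ Ωf j,
              κ i j q.1 q.2 * ((g i - g j) * (Real.log (g i) - Real.log (g j))
                + (Real.log (g i) - Real.log (g j) + 1 - g j / g i) * (f q.1 - g i)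
                + (Real.log (g j) - Real.log (g i) + 1 - g i / g j) * (f q.2 - g j))
              = ((g i - g j) * (Real.log (g i) - Real.log (g j))
                  - (Real.log (g i) - Real.log (g j) + 1 - g j / g i) * g i
                  - (Real.log (g j) - Real.log (g i) + 1 - g i / g j) * g j) * κ i j q.1 q.2
                + (Real.log (g i) - Real.log (g j) + 1 - g j / g i) * (κ i j q.1 q.2 * f q.1)
                + (Real.log (g j) - Real.log (g i) + 1 - g i / g j) * (κ i j q.1 q.2 * f q.2) :=
            fun q _ => by ring
          rw [Finset.sum_congr rfl e2, Finset.sum_add_distrib, Finset.sum_add_distrib,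
            ← Finset.mul_sum, ← Finset.mul_sum, ← Finset.mul_sum, hSκ, hSfx, hSfy]
          ring
        rw [hL] at hsum
        exact hsum
      have hterm : ∀ q ∈ Ωf i ×ˢ Ωf j,
          χ * (pbar i * Qbar i j) * (κ i j q.1 q.2
              * ((f q.1 - f q.2) * (Real.log (f q.1) - Real.log (f q.2))))
            ≤ π q.1 * Q q.1 q.2 * ((f q.1 - f q.2) * (Real.log (f q.1) - Real.log (f q.2))) := by
        intro q hq
        obtain ⟨hpx, hpy⟩ := hmemx q hq
        have h1 := hχle i j q.1 q.2 hij' hpx hpy hQb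
        have h2 := phi_nonneg (f q.1) (f q.2) (hf _) (hf _)
        calc χ * (pbar i * Qbar i j) * (κ i j q.1 q.2
                * ((f q.1 - f q.2) * (Real.log (f q.1) - Real.log (f q.2))))
            = (χ * (pbar i * Qbar i j * κ i j q.1 q.2))
                * ((f q.1 - f q.2) * (Real.log (f q.1) - Real.log (f q.2))) := by ring
          _ ≤ (π q.1 * Q q.1 q.2)
                * ((f q.1 - f q.2) * (Real.log (f q.1) - Real.log (f q.2))) :=
              mul_le_mul_of_nonneg_right h1 h2
      calc χ * (pbar i * Qbar i j) * ((g i - g j) * (Real.log (g i) - Real.log (g j)))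
          ≤ χ * (pbar i * Qbar i j) * (∑ q ∈ Ωf i ×ˢ Ωf j, κ i j q.1 q.2
              * ((f q.1 - f q.2) * (Real.log (f q.1) - Real.log (f q.2)))) :=
            mul_le_mul_of_nonneg_left hJ
              (mul_nonneg hχ (mul_pos (hpbarpos i) hQb).le)
        _ = ∑ q ∈ Ωf i ×ˢ Ωf j, χ * (pbar i * Qbar i j) * (κ i j q.1 q.2
              * ((f q.1 - f q.2) * (Real.log (f q.1) - Real.log (f q.2)))) := by
            rw [Finset.mul_sum]
        _ ≤ ∑ q ∈ Ωf i ×ˢ Ωf j,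
              π q.1 * Q q.1 q.2 * ((f q.1 - f q.2) * (Real.log (f q.1) - Real.log (f q.2))) :=
            Finset.sum_le_sum hterm
        _ = ∑ x ∈ Ωf i, ∑ y ∈ Ωf j,
              π x * Q x y * ((f x - f y) * (Real.log (f x) - Real.log (f y))) :=
            Finset.sum_product _ _ _
    · have h0 : Qbar i j = 0 := le_antisymm (not_lt.mp hQb) (hQbnn i j hij0)
      rw [h0]
      simp only [mul_zero, zero_mul]
      refine Finset.sum_nonneg fun x hx => Finset.sum_nonneg fun y hy => ?_
      have hxy : x ≠ y := by
        intro h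
        exact hij0 (by rw [← (Finset.mem_filter.mp hx).2, h, (Finset.mem_filter.mp hy).2])
      exact mul_nonneg (mul_nonneg (hπ x).le (hQoff x y hxy))
        (phi_nonneg (f x) (f y) (hf x) (hf y))
  -- projection chain Dirichlet form identity
  have hPform : -(∑ i, pbar i * g i * ∑ j, Qbar i j * Real.log (g j))
      = (1/2) * ∑ i, ∑ j ∈ univ.filter (fun j => ¬ i = j),
          pbar i * Qbar i j * ((g i - g j) * (Real.log (g i) - Real.log (g j))) := by
    have h1 := generator_form pbar Qbar g (fun i => Real.log (g i)) hQbarrow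
    have hswapI : ∀ q ∈ (univ ×ˢ univ : Finset (I × I)).filter (fun r => ¬ r.1 = r.2),
        q.swap ∈ (univ ×ˢ univ : Finset (I × I)).filter (fun r => ¬ r.1 = r.2) := by
      intro q hq
      simp only [Finset.mem_filter, Finset.mem_product, Finset.mem_univ, true_and,
        Prod.fst_swap, Prod.snd_swap] at *
      exact fun h => hq h.symm
    calc -(∑ i, pbar i * g i * ∑ j, Qbar i j * Real.log (g j))
        = ∑ q ∈ (univ ×ˢ univ : Finset (I × I)),
            pbar q.1 * Qbar q.1 q.2 * (g q.1 * (Real.log (g q.1) - Real.log (g q.2))) := h1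
      _ = ∑ q ∈ (univ ×ˢ univ : Finset (I × I)).filter (fun r => ¬ r.1 = r.2),
            pbar q.1 * Qbar q.1 q.2 * (g q.1 * (Real.log (g q.1) - Real.log (g q.2))) := by
          rw [← Finset.sum_filter_add_sum_filter_not (univ ×ˢ univ : Finset (I × I))
            (fun r => ¬ r.1 = r.2)]
          have hz : ∑ q ∈ (univ ×ˢ univ : Finset (I × I)).filter (fun r => ¬¬ r.1 = r.2),
              pbar q.1 * Qbar q.1 q.2 * (g q.1 * (Real.log (g q.1) - Real.log (g q.2))) = 0 := by
            refine Finset.sum_eq_zero fun q hq => ?_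
            have : q.1 = q.2 := not_not.mp (Finset.mem_filter.mp hq).2
            rw [this]
            simp
          rw [hz, add_zero]
      _ = (1/2) * ∑ q ∈ (univ ×ˢ univ : Finset (I × I)).filter (fun r => ¬ r.1 = r.2),
            pbar q.1 * Qbar q.1 q.2 * ((g q.1 - g q.2) * (Real.log (g q.1) - Real.log (g q.2))) :=
          sym_pairs pbar Qbar g (fun i => Real.log (g i)) hQbrev _ hswapI
      _ = (1/2) * ∑ i, ∑ j ∈ univ.filter (fun j => ¬ i = j),
            pbar i * Qbar i j * ((g i - g j) * (Real.log (g i) - Real.log (g j))) := by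
          rw [sum_product_filter (fun i j => ¬ i = j)
            (fun i j => pbar i * Qbar i j * ((g i - g j) * (Real.log (g i) - Real.log (g j))))]
  -- lower bound for the cross part
  have hcrosslb : ∑ q ∈ (univ ×ˢ univ : Finset (Ω × Ω)).filter (fun q => ¬ p q.1 = p q.2),
          π q.1 * Q q.1 q.2 * (f q.1 * (Real.log (f q.1) - Real.log (f q.2)))
      ≥ χ * (abar * entOf pbar g) := by
    rw [hcrossym, hgroup]
    have step1 : ∑ i, ∑ j ∈ univ.filter (fun j => ¬ i = j),
          χ * (pbar i * Qbar i j) * ((g i - g j) * (Real.log (g i) - Real.log (g j)))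
        ≤ ∑ i, ∑ j ∈ univ.filter (fun j => ¬ i = j), ∑ x ∈ Ωf i, ∑ y ∈ Ωf j,
            π x * Q x y * ((f x - f y) * (Real.log (f x) - Real.log (f y))) := by
      refine Finset.sum_le_sum fun i _ => Finset.sum_le_sum fun j hj => ?_
      exact hij i j (Finset.mem_filter.mp hj).2
    have step2 : χ * (abar * entOf pbar g)
        ≤ χ * (-(∑ i, pbar i * g i * ∑ j, Qbar i j * Real.log (g j))) :=
      mul_le_mul_of_nonneg_left (hproj g hgpos) hχ
    have step3 : χ * (-(∑ i, pbar i * g i * ∑ j, Qbar i j * Real.log (g j)))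
        = (1/2) * ∑ i, ∑ j ∈ univ.filter (fun j => ¬ i = j),
            χ * (pbar i * Qbar i j) * ((g i - g j) * (Real.log (g i) - Real.log (g j))) := by
      rw [hPform, mul_left_comm]
      congr 1
      rw [Finset.mul_sum]
      refine Finset.sum_congr rfl fun i _ => ?_
      rw [Finset.mul_sum]
      exact Finset.sum_congr rfl fun j _ => by ring
    have : (1/2 : ℝ) * ∑ i, ∑ j ∈ univ.filter (fun j => ¬ i = j),
          χ * (pbar i * Qbar i j) * ((g i - g j) * (Real.log (g i) - Real.log (g j)))
        ≤ (1/2) * ∑ i, ∑ j ∈ univ.filter (fun j => ¬ i = j), ∑ x ∈ Ωf i, ∑ y ∈ Ωf j,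
            π x * Q x y * ((f x - f y) * (Real.log (f x) - Real.log (f y))) := by
      refine mul_le_mul_of_nonneg_left step1 (by norm_num)
    linarith [step2, step3.symm.le, step3.le, this]
  -- assemble
  rw [ge_iff_le, hentdec, hD, hsplit]
  have hE1nn : 0 ≤ ∑ i, pbar i * entOf (cond i) f :=
    Finset.sum_nonneg fun i _ => mul_nonneg (hpbarpos i).le (hEntinn i)
  have hm1 : min (χ * abar) (Finset.univ.inf' Finset.univ_nonempty alo) ≤ χ * abar :=
    min_le_left _ _
  have hm2 : min (χ * abar) (Finset.univ.inf' Finset.univ_nonempty alo)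
      ≤ Finset.univ.inf' Finset.univ_nonempty alo := min_le_right _ _
  nlinarith [hsamelb, hcrosslb, mul_le_mul_of_nonneg_right hm1 hEntbarnn,
    mul_le_mul_of_nonneg_right hm2 hE1nn]
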